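/- For every real γ > −1, the function f(κ) = (γ+2) Li_{γ+2}(e^κ) − κ · Li_{γ+1}(e^κ) is strictly increasing on the interval (−∞, 0). (This expresses that the entropy of the γ-parameter ideal Bose gas is strictly increasing in the chemical potential μ < 0, so its maximum is approached as μ → 0.) -/

import Mathlib

/-- Polylogarithm Li_s(z) = ∑_{n=1}^∞ z^n / n^s. -/
noncomputable def polylog (s z : ℝ) : ℝ := ∑' n : ℕ, z ^ (n + 1) / (n + 1 : ℝ) ^ s

lemma polylog_summable {s z : ℝ} (hs : 0 ≤ s) (hz0 : 0 ≤ z) (hz1 : z < 1) :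
    Summable (fun n : ℕ => z ^ (n + 1) / (n + 1 : ℝ) ^ s) := by
  apply Summable.of_nonneg_of_le (f := fun n : ℕ => z ^ (n + 1)) (fun n => by positivity)
  · intro n
    have h1 : (1 : ℝ) ≤ (n + 1 : ℝ) ^ s :=
      Real.one_le_rpow (by exact_mod_cast Nat.one_le_iff_ne_zero.mpr (Nat.succ_ne_zero n)) hs
    calc z ^ (n + 1) / (n + 1 : ℝ) ^ s ≤ z ^ (n + 1) / 1 := by
          apply div_le_div_of_nonneg_left (by positivity) one_pos h1
      _ = z ^ (n + 1) := by ring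
  · simpa [pow_succ, mul_comm] using (summable_geometric_of_lt_one hz0 hz1).mul_left z

lemma core_mono {c B : ℝ} (hc : 0 < c) (hB : 0 < B) :
    StrictMonoOn (fun κ : ℝ => Real.exp (c * κ) * (B + 1 - c * κ)) (Set.Iio 0) := by
  have hderiv : ∀ x : ℝ, HasDerivAt (fun κ : ℝ => Real.exp (c * κ) * (B + 1 - c * κ))
      (c * Real.exp (c * x) * (B - c * x)) x := by
    intro x
    have h1 : HasDerivAt (fun κ : ℝ => Real.exp (c * κ)) (Real.exp (c * x) * c) x := by
      simpa using ((hasDerivAt_id x).const_mul c).exp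
    have h2 : HasDerivAt (fun κ : ℝ => B + 1 - c * κ) (-c) x := by
      simpa using ((hasDerivAt_id x).const_mul c).const_sub (B + 1)
    have : HasDerivAt (fun κ : ℝ => Real.exp (c * κ) * (B + 1 - c * κ)) _ x := h1.mul h2
    convert this using 1
    ring
  apply strictMonoOn_of_deriv_pos (convex_Iio 0)
  · exact (Continuous.mul (Real.continuous_exp.comp (continuous_const.mul continuous_id))
      (by continuity)).continuousOn
  · intro x hx
    rw [interior_Iio] at hx
    rw [(hderiv x).deriv]
    have hx' : x < 0 := hx
    have : 0 < B - c * x := by nlinarith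
    positivity

/-- For every real γ > −1, the function
f(κ) = (γ+2)·Li_{γ+2}(e^κ) − κ·Li_{γ+1}(e^κ) is strictly increasing on (−∞, 0):
the entropy of the γ-parameter ideal Bose gas is strictly increasing in the
chemical potential μ < 0. -/
theorem entropy_strictMonoOn_neg_chemical_potential (γ : ℝ) (hγ : -1 < γ) :
    StrictMonoOn
      (fun κ : ℝ =>
        (γ + 2) * polylog (γ + 2) (Real.exp κ) - κ * polylog (γ + 1) (Real.exp κ))
      (Set.Iio 0) := by
  have hγ2 : (0:ℝ) ≤ γ + 2 := by linarith
  have hγ1 : (0:ℝ) ≤ γ + 1 := by linarith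
  -- the combined term
  set h : ℕ → ℝ → ℝ := fun n κ =>
    Real.exp (((n : ℝ) + 1) * κ) * ((γ + 1) + 1 - ((n : ℝ) + 1) * κ) / (n + 1 : ℝ) ^ (γ + 2)
    with hh
  have hz : ∀ κ : ℝ, κ < 0 → Real.exp κ < 1 := fun κ hκ => Real.exp_lt_one_iff.mpr hκ
  have hzpos : ∀ κ : ℝ, (0:ℝ) ≤ Real.exp κ := fun κ => (Real.exp_pos κ).le
  -- rewrite f κ as a tsum of h n κ
  have key : ∀ κ : ℝ, κ < 0 →
      (γ + 2) * polylog (γ + 2) (Real.exp κ) - κ * polylog (γ + 1) (Real.exp κ)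
        = ∑' n : ℕ, h n κ := by
    intro κ hκ
    have s2 := polylog_summable hγ2 (hzpos κ) (hz κ hκ)
    have s1 := polylog_summable hγ1 (hzpos κ) (hz κ hκ)
    unfold polylog
    rw [← tsum_mul_left, ← tsum_mul_left, ← Summable.tsum_sub (s2.mul_left _) (s1.mul_left _)]
    apply tsum_congr
    intro n
    have hn1 : (0:ℝ) < (n:ℝ) + 1 := by positivity
    have hrpow : ((n:ℝ) + 1) ^ (γ + 2) = ((n:ℝ) + 1) ^ (γ + 1) * ((n:ℝ) + 1) := by
      rw [show γ + 2 = (γ + 1) + 1 by ring, Real.rpow_add_one hn1.ne']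
    have hexp : Real.exp κ ^ (n + 1) = Real.exp (((n : ℝ) + 1) * κ) := by
      rw [← Real.exp_nat_mul]
      push_cast
      ring_nf
    rw [hh]
    simp only
    rw [hexp, hrpow]
    have hp1 : ((n:ℝ) + 1) ^ (γ + 1) ≠ 0 := by positivity
    field_simp
    ring
  -- summability of h · κ
  have hsummable : ∀ κ : ℝ, κ < 0 → Summable (fun n => h n κ) := by
    intro κ hκ
    have s2 := polylog_summable hγ2 (hzpos κ) (hz κ hκ)
    have s1 := polylog_summable hγ1 (hzpos κ) (hz κ hκ)
    have := (s2.mul_left (γ + 2)).sub (s1.mul_left κ)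
    apply this.congr
    intro n
    -- same computation as above
    have hn1 : (0:ℝ) < (n:ℝ) + 1 := by positivity
    have hrpow : ((n:ℝ) + 1) ^ (γ + 2) = ((n:ℝ) + 1) ^ (γ + 1) * ((n:ℝ) + 1) := by
      rw [show γ + 2 = (γ + 1) + 1 by ring, Real.rpow_add_one hn1.ne']
    have hexp : Real.exp κ ^ (n + 1) = Real.exp (((n : ℝ) + 1) * κ) := by
      rw [← Real.exp_nat_mul]
      push_cast
      ring_nf
    rw [hh]
    simp only
    rw [hexp, hrpow]
    have hp1 : ((n:ℝ) + 1) ^ (γ + 1) ≠ 0 := by positivity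
    field_simp
    ring
  -- each term is strictly monotone
  have hmono : ∀ n : ℕ, StrictMonoOn (fun κ => h n κ) (Set.Iio 0) := by
    intro n a ha b hb hab
    have hc : (0:ℝ) < (n:ℝ) + 1 := by positivity
    have hB : (0:ℝ) < γ + 1 := by linarith
    have hlt := core_mono hc hB ha hb hab
    have hC : (0:ℝ) < ((n:ℝ) + 1) ^ (γ + 2) := by positivity
    simp only [hh]
    exact div_lt_div_of_pos_right hlt hC
  intro a ha b hb hab
  beta_reduce
  rw [key a ha, key b hb]
  exact Summable.tsum_lt_tsum (fun n => (hmono n ha hb hab).le) (hmono 0 ha hb hab)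
    (hsummable a ha) (hsummable b hb)
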